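/- Let n ≥ 3 and let u : ℝ^n ∖ {0} → ℝ be a C² function that is harmonic (Δu = 0) and positively homogeneous of degree −1. If n ≥ 4 then u = 0, and if n = 3 then there exists a constant c with u(x) = c/|x| for all x ≠ 0. -/

import Mathlib

open MeasureTheory Finset
open scoped ENNReal

noncomputable section

abbrev Euc (n : ℕ) : Type := EuclideanSpace ℝ (Fin n)

variable {n : ℕ}

/-- Partial derivative in coordinate direction `i`. -/
def pd (i : Fin n) (f : Euc n → ℝ) : Euc n → ℝ :=
  fun x => fderiv ℝ f x (EuclideanSpace.single i 1)

/-- Iterated partial derivative along a list of coordinate directions. -/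
def pdList : List (Fin n) → (Euc n → ℝ) → Euc n → ℝ
  | [], f => f
  | i :: L, f => pd i (pdList L f)

/-- The canonical list of coordinate directions associated to a multi-index. -/
def mlist (α : Fin n → ℕ) : List (Fin n) :=
  ((List.finRange n).map fun i => List.replicate (α i) i).flatten

/-- Multi-index partial derivative `∂_α`. -/
def mderiv (α : Fin n → ℕ) (f : Euc n → ℝ) : Euc n → ℝ :=
  pdList (mlist α) f

/-- The Euclidean Laplacian. -/
def lap (f : Euc n → ℝ) : Euc n → ℝ :=
  fun x => ∑ i, pd i (pd i f) x

/-- The Euclidean conformal Killing operator `(𝕃 W)_{a b}`. -/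
def cko (W : Euc n → Euc n) (a b : Fin n) : Euc n → ℝ :=
  fun x => pd a (fun y => W y b) x + pd b (fun y => W y a) x
    - (if a = b then 2 / (n : ℝ) else 0) * ∑ c, pd c (fun y => W y c) x

/-- The Euclidean vector Laplacian `(P̄ W)_a = ½ Σ_b ∂_b (𝕃W)_{a b}`. -/
def vecLap (W : Euc n → Euc n) : Euc n → Euc n :=
  fun x => (EuclideanSpace.equiv (Fin n) ℝ).symm fun a => (1 / 2) * ∑ b, pd b (cko W a b) x

/-- `f` is positively homogeneous of degree `d`: `f (t • x) = t ^ d • f x` for `t > 0`, `x ≠ 0`. -/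
def PosHomog {F : Type*} [SMul ℝ F] (d : ℝ) (f : Euc n → F) : Prop :=
  ∀ t : ℝ, 0 < t → ∀ x : Euc n, x ≠ 0 → f (t • x) = t ^ d • f x

/-- The surface measure on the unit sphere `S^{n-1} ⊆ ℝ^n`
((n-1)-dimensional Hausdorff measure restricted to the sphere). -/
def sphMeas (n : ℕ) : Measure (Euc n) :=
  (μH[(n : ℝ) - 1]).restrict (Metric.sphere (0 : Euc n) 1)

/-- `|S^{n-1}|`, the total surface measure of the unit sphere. -/
def sphVol (n : ℕ) : ℝ := (sphMeas n Set.univ).toReal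

/-- The constant `C_n = 1 / (4 (n-1) (n-2) |S^{n-1}|)`. -/
def Cconst (n : ℕ) : ℝ := 1 / (4 * ((n : ℝ) - 1) * ((n : ℝ) - 2) * sphVol n)

/-- The Green's function `G^{ab}` of the Euclidean vector Laplacian. -/
def GreenFn (n : ℕ) (a b : Fin n) (x : Euc n) : ℝ :=
  -2 * Cconst n * ‖x‖ ^ ((2 : ℝ) - n) *
    ((3 * (n : ℝ) - 2) * (if a = b then 1 else 0)
      + ((n : ℝ) - 2) ^ 2 * (x a / ‖x‖) * (x b / ‖x‖))

/-- The `j`-th column `G_{(j)}` of the Green's function. -/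
def GreenCol (n : ℕ) (j : Fin n) : Euc n → Euc n :=
  fun x => (EuclideanSpace.equiv (Fin n) ℝ).symm fun a => GreenFn n a j x

/-- The Japanese-bracket weight `⟨x⟩^{-n - p δ}`. -/
def jweight (n : ℕ) (p δ : ℝ) (x : Euc n) : ℝ :=
  (1 + ‖x‖ ^ 2) ^ ((-(n : ℝ) - p * δ) / 2)

/-- The finite set of multi-indices of total degree at most `k`. -/
def midx (n k : ℕ) : Finset (Fin n → Fin (k + 1)) :=
  Finset.univ.filter fun α => ∑ i, (α i : ℕ) ≤ k

/-- The `p`-th power of the weighted Sobolev norm `‖f‖_{W^{k,p}_δ}`, with the integrals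
taken over the set `s`. -/
def wnormPOn (p δ : ℝ) (k : ℕ) (f : Euc n → ℝ) (s : Set (Euc n)) : ℝ≥0∞ :=
  ∑ α ∈ midx n k,
    ∫⁻ x in s, ENNReal.ofReal (jweight n p δ x * |mderiv (fun i => (α i : ℕ)) f x| ^ p)

/-- The `p`-th power of the weighted Sobolev norm `‖f‖_{W^{k,p}_δ}`. -/
def wnormP (p δ : ℝ) (k : ℕ) (f : Euc n → ℝ) : ℝ≥0∞ := wnormPOn p δ k f Set.univ

/-- The weighted Sobolev norm `‖f‖_{W^{k,p}_δ}` of a scalar function, valued in `ℝ≥0∞`. -/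
def wnorm (p δ : ℝ) (k : ℕ) (f : Euc n → ℝ) : ℝ≥0∞ := wnormP p δ k f ^ (1 / p)

/-- The weighted Sobolev norm of a vector field: componentwise, summed. -/
def wnormV (p δ : ℝ) (k : ℕ) (F : Euc n → Euc n) : ℝ≥0∞ :=
  ∑ a, wnorm p δ k fun x => F x a

/-- A weight `δ` is nonexceptional if it is not an integer, or if `2 - n < δ < 0`. -/
def Nonexceptional (n : ℕ) (δ : ℝ) : Prop :=
  (¬ ∃ m : ℤ, δ = m) ∨ (2 - (n : ℝ) < δ ∧ δ < 0)

lemma HasFDerivAt.pd_eq {f : Euc n → ℝ} {x : Euc n} {L : Euc n →L[ℝ] ℝ}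
    (h : HasFDerivAt f L x) (i : Fin n) : pd i f x = L (EuclideanSpace.single i 1) := by
  rw [pd, h.fderiv]

lemma pd_congr {f g : Euc n → ℝ} {x : Euc n} (h : f =ᶠ[nhds x] g) (i : Fin n) :
    pd i f x = pd i g x := by
  rw [pd, pd, Filter.EventuallyEq.fderiv_eq h]

lemma diffAt_of_contDiffOn {U : Set (Euc n)} (hU : IsOpen U) {f : Euc n → ℝ}
    (hf : ContDiffOn ℝ 2 f U) {x : Euc n} (hx : x ∈ U) : DifferentiableAt ℝ f x :=
  (hf.differentiableOn (by norm_num)).differentiableAt (hU.mem_nhds hx)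

lemma pd_contDiffOn {U : Set (Euc n)} (hU : IsOpen U) {f : Euc n → ℝ}
    (hf : ContDiffOn ℝ 2 f U) (i : Fin n) : ContDiffOn ℝ 1 (pd i f) U := by
  have hfd : ContDiffOn ℝ 1 (fderiv ℝ f) U := hf.fderiv_of_isOpen hU (by norm_num)
  have : pd i f = (fun L : Euc n →L[ℝ] ℝ => L (EuclideanSpace.single i 1)) ∘ (fderiv ℝ f) := rfl
  rw [this]
  exact ((ContinuousLinearMap.apply ℝ ℝ (EuclideanSpace.single i 1)).contDiff).comp_contDiffOn hfd

lemma pd_diffAt {U : Set (Euc n)} (hU : IsOpen U) {f : Euc n → ℝ}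
    (hf : ContDiffOn ℝ 2 f U) (i : Fin n) {x : Euc n} (hx : x ∈ U) :
    DifferentiableAt ℝ (pd i f) x :=
  ((pd_contDiffOn hU hf i).differentiableOn (by norm_num)).differentiableAt (hU.mem_nhds hx)

lemma lap_add {U : Set (Euc n)} (hU : IsOpen U) {f g : Euc n → ℝ}
    (hf : ContDiffOn ℝ 2 f U) (hg : ContDiffOn ℝ 2 g U) {x : Euc n} (hx : x ∈ U) :
    lap (fun y => f y + g y) x = lap f x + lap g x := by
  have key : ∀ i : Fin n, pd i (pd i (fun y => f y + g y)) x
      = pd i (pd i f) x + pd i (pd i g) x := by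
    intro i
    have h1 : pd i (fun y => f y + g y) =ᶠ[nhds x] (fun y => pd i f y + pd i g y) := by
      filter_upwards [hU.mem_nhds hx] with y hy
      have := ((diffAt_of_contDiffOn hU hf hy).hasFDerivAt.add
        (diffAt_of_contDiffOn hU hg hy).hasFDerivAt).pd_eq i
      simpa [pd, Pi.add_def] using this
    rw [pd_congr h1 i]
    have := ((pd_diffAt hU hf i hx).hasFDerivAt.add (pd_diffAt hU hg i hx).hasFDerivAt).pd_eq i
    simpa [pd, Pi.add_def] using this
  simp only [lap]
  rw [← Finset.sum_add_distrib]
  exact Finset.sum_congr rfl fun i _ => key i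

lemma pd_neg (f : Euc n → ℝ) (i : Fin n) : pd i (fun y => -f y) = fun y => -(pd i f y) := by
  funext y; simp [pd, fderiv_neg]

lemma lap_neg (f : Euc n → ℝ) (x : Euc n) : lap (fun y => -f y) x = - lap f x := by
  simp only [lap, pd_neg]
  simp [← Finset.sum_neg_distrib]

lemma pd_sub_const (f : Euc n → ℝ) (c : ℝ) (i : Fin n) :
    pd i (fun y => f y - c) = pd i f := by
  funext y; simp [pd, fderiv_sub_const]

lemma lap_sub_const (f : Euc n → ℝ) (c : ℝ) (x : Euc n) :
    lap (fun y => f y - c) x = lap f x := by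
  simp only [lap, pd_sub_const]
lemma lap_const_mul {U : Set (Euc n)} (hU : IsOpen U) {f : Euc n → ℝ} (c : ℝ)
    (hf : ContDiffOn ℝ 2 f U) {x : Euc n} (hx : x ∈ U) :
    lap (fun y => c * f y) x = c * lap f x := by
  have key : ∀ i : Fin n, pd i (pd i (fun y => c * f y)) x = c * pd i (pd i f) x := by
    intro i
    have h1 : pd i (fun y => c * f y) =ᶠ[nhds x] (fun y => c * pd i f y) := by
      filter_upwards [hU.mem_nhds hx] with y hy
      have := ((diffAt_of_contDiffOn hU hf hy).hasFDerivAt.const_mul c).pd_eq i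
      simpa [pd] using this
    rw [pd_congr h1 i]
    have := ((pd_diffAt hU hf i hx).hasFDerivAt.const_mul c).pd_eq i
    simpa [pd] using this
  simp only [lap, Finset.mul_sum]
  exact Finset.sum_congr rfl fun i _ => key i

/-- 1D second derivative test at a local max. -/
lemma second_deriv_test {h h' : ℝ → ℝ} {c : ℝ}
    (hd : ∀ᶠ t in nhds (0:ℝ), HasDerivAt h (h' t) t)
    (hd2 : HasDerivAt h' c 0)
    (hmax : IsLocalMax h 0) : c ≤ 0 := by
  by_contra hc
  push_neg at hc
  have h'0 : h' 0 = 0 := by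
    have : deriv h 0 = 0 := hmax.deriv_eq_zero
    have hh : HasDerivAt h (h' 0) 0 := hd.self_of_nhds
    rw [← hh.deriv]; exact this
  -- slope of h' at 0 tends to c > 0, so h' > 0 on a right neighborhood
  have hslope := hasDerivAt_iff_tendsto_slope.1 hd2
  have hpos : ∀ᶠ t in nhdsWithin 0 (Set.Ioi (0:ℝ)), 0 < h' t := by
    have h2 : Filter.Tendsto (slope h' 0) (nhdsWithin 0 (Set.Ioi (0:ℝ))) (nhds c) :=
      hslope.mono_left (nhdsWithin_mono 0 (by intro t ht; exact ne_of_gt ht))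
    have h3 : ∀ᶠ t in nhdsWithin 0 (Set.Ioi (0:ℝ)), 0 < slope h' 0 t :=
      h2.eventually (eventually_gt_nhds hc)
    filter_upwards [h3, self_mem_nhdsWithin] with t ht ht'
    have hs : slope h' 0 t = h' t / t := by
      rw [slope_def_field, h'0, sub_zero, sub_zero]
    rw [hs] at ht
    have := mul_pos ht (show (0:ℝ) < t from ht')
    rwa [div_mul_cancel₀] at this
    exact ne_of_gt ht'
  rw [eventually_nhdsWithin_iff] at hpos
  obtain ⟨δ₁, hδ₁, hball⟩ := Metric.eventually_nhds_iff.1 (hpos.and hd)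
  obtain ⟨δ₂, hδ₂, hmaxball⟩ := Metric.eventually_nhds_iff.1 (hmax : ∀ᶠ t in nhds (0:ℝ), h t ≤ h 0)
  set δ := min δ₁ δ₂ / 2 with hδdef
  have hδpos : 0 < δ := by positivity
  have hδlt1 : δ < δ₁ := by
    calc δ < min δ₁ δ₂ := by rw [hδdef]; linarith [lt_min hδ₁ hδ₂]
    _ ≤ δ₁ := min_le_left _ _
  have hδlt2 : δ < δ₂ := by
    calc δ < min δ₁ δ₂ := by rw [hδdef]; linarith [lt_min hδ₁ hδ₂]
    _ ≤ δ₂ := min_le_right _ _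
  -- h is strictly monotone on [0, δ]
  have hmono : StrictMonoOn h (Set.Icc 0 δ) := by
    apply strictMonoOn_of_deriv_pos (convex_Icc 0 δ)
    · intro t ht
      have : dist t (0:ℝ) < δ₁ := by
        rw [Real.dist_eq, sub_zero, abs_of_nonneg ht.1]; linarith [ht.2]
      exact ((hball this).2).continuousAt.continuousWithinAt
    · intro t ht
      rw [interior_Icc] at ht
      have hdist : dist t (0:ℝ) < δ₁ := by
        rw [Real.dist_eq, sub_zero, abs_of_nonneg (le_of_lt ht.1)]; linarith [ht.2]
      have := hball hdist
      rw [(this.2).deriv]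
      exact this.1 ht.1
  have : h 0 < h δ := hmono (by constructor <;> [rfl; exact le_of_lt hδpos])
    (Set.mem_Icc.2 ⟨le_of_lt hδpos, le_refl δ⟩) hδpos
  have : h δ ≤ h 0 := hmaxball (by rw [Real.dist_eq, sub_zero, abs_of_nonneg (le_of_lt hδpos)]; exact hδlt2)
  linarith

variable {n : ℕ}

lemma pd_pd_nonpos_at_localMax {U : Set (Euc n)} (hU : IsOpen U) {f : Euc n → ℝ}
    (hf : ContDiffOn ℝ 2 f U) {x : Euc n} (hx : x ∈ U)
    (hmax : IsLocalMax f x) (i : Fin n) : pd i (pd i f) x ≤ 0 := by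
  set v : Euc n := EuclideanSpace.single i 1 with hv
  set L : ℝ → Euc n := fun t => x + t • v with hL
  have hLd : ∀ t : ℝ, HasDerivAt L v t := by
    intro t
    have := ((hasDerivAt_id' t).smul_const v).const_add x
    rw [one_smul] at this
    exact this
  have hLc : Continuous L := by fun_prop
  have hL0 : L 0 = x := by simp [hL]
  have hnb : ∀ᶠ t in nhds (0:ℝ), L t ∈ U := by
    have := hLc.continuousAt (x := (0:ℝ))
    rw [ContinuousAt, hL0] at this
    exact this (hU.mem_nhds hx)
  have hd : ∀ᶠ t in nhds (0:ℝ), HasDerivAt (fun t => f (L t)) (pd i f (L t)) t := by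
    filter_upwards [hnb] with t ht
    have hF : HasFDerivAt f (fderiv ℝ f (L t)) (L t) :=
      (diffAt_of_contDiffOn hU hf ht).hasFDerivAt
    exact hF.comp_hasDerivAt t (hLd t)
  have hd2 : HasDerivAt (fun t => pd i f (L t)) (pd i (pd i f) x) 0 := by
    have hF : HasFDerivAt (pd i f) (fderiv ℝ (pd i f) x) x :=
      (pd_diffAt hU hf i hx).hasFDerivAt
    have h2 : HasFDerivAt (pd i f) (fderiv ℝ (pd i f) x) (L 0) := by rw [hL0]; exact hF
    have := h2.comp_hasDerivAt (0:ℝ) (hLd 0)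
    exact this
  have hm : IsLocalMax (fun t => f (L t)) 0 := by
    have : Filter.Tendsto L (nhds 0) (nhds x) := by
      rw [← hL0]; exact hLc.continuousAt
    have h3 := this.eventually (hmax : ∀ᶠ y in nhds x, f y ≤ f x)
    have : f (L 0) = f x := by rw [hL0]
    unfold IsLocalMax IsMaxFilter
    simpa [this] using h3
  exact second_deriv_test hd hd2 hm

/-- Weak maximum principle, strict subsolution version. -/
lemma exists_frontier_max {s : Set (Euc n)} (hs : IsCompact s) {f : Euc n → ℝ}
    (hf : ContinuousOn f s) (hf2 : ContDiffOn ℝ 2 f (interior s))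
    (hlap : ∀ x ∈ interior s, 0 < lap f x) {z : Euc n} (hz : z ∈ s) :
    ∃ w ∈ s \ interior s, f z ≤ f w := by
  obtain ⟨m, hm, hmax⟩ := hs.exists_isMaxOn ⟨z, hz⟩ hf
  by_cases hmi : m ∈ interior s
  · exfalso
    have hlm : IsLocalMax f m := hmax.isLocalMax (mem_interior_iff_mem_nhds.1 hmi)
    have : lap f m ≤ 0 := by
      rw [lap]
      exact Finset.sum_nonpos fun i _ =>
        pd_pd_nonpos_at_localMax isOpen_interior hf2 hmi hlm i
    linarith [hlap m hmi]
  · exact ⟨m, ⟨hm, hmi⟩, hmax hz⟩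

/-! ### Radial functions -/

def nsqc (c : Euc n) : Euc n → ℝ := fun x => ‖x - c‖ ^ 2

lemma nsqc_eq_sum (c x : Euc n) : nsqc c x = ∑ i, ((x - c) i) ^ 2 := by
  have := real_inner_self_eq_norm_sq (x - c)
  rw [nsqc, ← this, PiLp.inner_apply]
  simp [sq]

lemma nsqc_nonneg (c x : Euc n) : 0 ≤ nsqc c x := sq_nonneg _

lemma nsqc_pos {c x : Euc n} (h : x ≠ c) : 0 < nsqc c x := by
  rw [nsqc]
  have : ‖x - c‖ ≠ 0 := by simp [sub_eq_zero, h]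
  positivity

lemma hasFDerivAt_nsqc (c x : Euc n) :
    HasFDerivAt (nsqc c) (2 • (innerSL ℝ (x - c))) x := by
  have h1 : HasFDerivAt (fun y : Euc n => y - c) (ContinuousLinearMap.id ℝ (Euc n)) x :=
    (hasFDerivAt_id x).sub_const c
  have := ((hasStrictFDerivAt_norm_sq (x - c)).hasFDerivAt).comp x h1
  rw [ContinuousLinearMap.comp_id] at this
  exact this

lemma innerSL_single (x : Euc n) (i : Fin n) :
    (innerSL ℝ x) (EuclideanSpace.single i 1) = x i := by
  simp [EuclideanSpace.inner_single_right, real_inner_comm]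

lemma contDiff_nsqc (c : Euc n) : ContDiff ℝ 2 (nsqc c) := by
  have h1 : ContDiff ℝ 2 (fun y : Euc n => y - c) := contDiff_id.sub contDiff_const
  exact (contDiff_norm_sq (𝕜 := ℝ) (n := 2)).comp h1

/-- Master computation: Laplacian of a radial function `g ∘ nsqc c`. -/
lemma lap_radial (g G G' : ℝ → ℝ) (c : Euc n) (U : Set (Euc n)) (hU : IsOpen U)
    (x : Euc n) (hx : x ∈ U)
    (hg : ∀ y ∈ U, HasDerivAt g (G (nsqc c y)) (nsqc c y))
    (hG : HasDerivAt G (G' (nsqc c x)) (nsqc c x)) :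
    lap (fun y => g (nsqc c y)) x = 4 * G' (nsqc c x) * nsqc c x + 2 * n * G (nsqc c x) := by
  have h1 : ∀ y ∈ U, HasFDerivAt (fun y => g (nsqc c y))
      ((G (nsqc c y)) • (2 • (innerSL ℝ (y - c)))) y := fun y hy =>
    (hg y hy).comp_hasFDerivAt y (hasFDerivAt_nsqc c y)
  have hpd : ∀ i : Fin n, ∀ y ∈ U,
      pd i (fun y => g (nsqc c y)) y = G (nsqc c y) * (2 * (y - c) i) := by
    intro i y hy
    rw [(h1 y hy).pd_eq]
    simp [innerSL_single, two_smul]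
    ring
  have key : ∀ i : Fin n, pd i (pd i (fun y => g (nsqc c y))) x
      = 4 * G' (nsqc c x) * ((x - c) i) ^ 2 + 2 * G (nsqc c x) := by
    intro i
    have he : pd i (fun y => g (nsqc c y)) =ᶠ[nhds x]
        (fun y => G (nsqc c y) * (2 * (y - c) i)) := by
      filter_upwards [hU.mem_nhds hx] with y hy using hpd i y hy
    rw [pd_congr he]
    have hGc : HasFDerivAt (fun y : Euc n => G (nsqc c y))
        ((G' (nsqc c x)) • (2 • (innerSL ℝ (x - c)))) x :=
      hG.comp_hasFDerivAt x (hasFDerivAt_nsqc c x)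
    have hco : HasFDerivAt (fun y : Euc n => 2 * (y - c) i)
        ((2:ℝ) • (EuclideanSpace.proj (𝕜 := ℝ) i)) x := by
      have hsub : HasFDerivAt (fun y : Euc n => (y - c) i)
          (EuclideanSpace.proj (𝕜 := ℝ) i) x := by
        have h1 : HasFDerivAt (fun y : Euc n => y - c) (ContinuousLinearMap.id ℝ (Euc n)) x :=
          (hasFDerivAt_id x).sub_const c
        have h2 := ((EuclideanSpace.proj (𝕜 := ℝ) i).hasFDerivAt (x := x - c)).comp x h1
        rw [ContinuousLinearMap.comp_id] at h2
        exact h2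
      simpa using hsub.const_mul (2:ℝ)
    have := (hGc.mul hco).pd_eq i
    rw [show pd i (fun y => G (nsqc c y) * (2 * (y - c) i)) x = _ from this]
    simp [innerSL_single, two_smul, EuclideanSpace.single_apply]
    ring
  have hsum : lap (fun y => g (nsqc c y)) x
      = ∑ i : Fin n, (4 * G' (nsqc c x) * ((x - c) i) ^ 2 + 2 * G (nsqc c x)) := by
    rw [lap]; exact Finset.sum_congr rfl fun i _ => key i
  rw [hsum, Finset.sum_add_distrib, ← Finset.mul_sum, ← nsqc_eq_sum]
  simp [Finset.card_univ]
  ring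

lemma lap_nsqc (c : Euc n) (x : Euc n) : lap (nsqc c) x = 2 * n := by
  have := lap_radial (fun t => t) (fun _ => 1) (fun _ => 0) c Set.univ isOpen_univ x trivial
    (fun y _ => hasDerivAt_id _) (hasDerivAt_const _ _)
  simp only [mul_zero, zero_mul, zero_add, mul_one] at this
  exact this

/-- Radial power `x ↦ ‖x - c‖ ^ (2 s)`. -/
def rpw (s : ℝ) (c : Euc n) : Euc n → ℝ := fun x => (nsqc c x) ^ s

lemma lap_rpw (s : ℝ) (c : Euc n) {x : Euc n} (hx : x ≠ c) :
    lap (rpw s c) x = (4 * s * (s - 1) + 2 * n * s) * (nsqc c x) ^ (s - 1) := by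
  have hU : IsOpen {y : Euc n | y ≠ c} := isOpen_compl_singleton
  have h := lap_radial (fun t => t ^ s) (fun t => s * t ^ (s - 1))
      (fun t => s * ((s - 1) * t ^ (s - 1 - 1))) c {y : Euc n | y ≠ c} hU x hx
      (fun y hy => Real.hasDerivAt_rpow_const (Or.inl (ne_of_gt (nsqc_pos hy))))
      (((Real.hasDerivAt_rpow_const (p := s - 1)
        (Or.inl (ne_of_gt (nsqc_pos hx)))).const_mul s))
  have h2 : (nsqc c x) ^ (s - 1 - 1) * nsqc c x = (nsqc c x) ^ (s - 1) := by
    rw [← Real.rpow_add_one (ne_of_gt (nsqc_pos hx))]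
    ring_nf
  have hr : rpw s c = fun y => (nsqc c y) ^ s := rfl
  rw [hr, h]
  linear_combination (4 * s * (s - 1)) * h2

lemma lap_rpw_harm (c : Euc n) {x : Euc n} (hx : x ≠ c) :
    lap (rpw ((2 - (n:ℝ)) / 2) c) x = 0 := by
  rw [lap_rpw _ c hx]
  have : 4 * ((2 - (n:ℝ)) / 2) * ((2 - (n:ℝ)) / 2 - 1) + 2 * n * ((2 - (n:ℝ)) / 2) = 0 := by
    ring
  rw [this, zero_mul]

lemma contDiffOn_rpw (s : ℝ) (c : Euc n) :
    ContDiffOn ℝ 2 (rpw s c) {y : Euc n | y ≠ c} := by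
  intro x hx
  apply ContDiffWithinAt.comp (t := {t : ℝ | t ≠ 0}) x
    (Real.contDiffAt_rpow_const_of_ne (ne_of_gt (nsqc_pos hx))).contDiffWithinAt
    ((contDiff_nsqc c).contDiffAt.contDiffWithinAt)
  intro y hy
  exact ne_of_gt (nsqc_pos hy)

/-- Gaussian barrier. -/
def gbar (α : ℝ) (c : Euc n) : Euc n → ℝ := fun x => Real.exp (-α * nsqc c x)

lemma lap_gbar (α : ℝ) (c : Euc n) (x : Euc n) :
    lap (gbar α c) x = (4 * α ^ 2 * nsqc c x - 2 * n * α) * Real.exp (-α * nsqc c x) := by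
  have hg : ∀ t : ℝ, HasDerivAt (fun t => Real.exp (-α * t)) (-α * Real.exp (-α * t)) t := by
    intro t
    have := ((hasDerivAt_id t).const_mul (-α)).exp
    simpa [mul_comm] using this
  have hG : HasDerivAt (fun t => -α * Real.exp (-α * t))
      ((fun t => α ^ 2 * Real.exp (-α * t)) (nsqc c x)) (nsqc c x) := by
    have := ((hg (nsqc c x)).const_mul (-α))
    refine this.congr_deriv ?_
    beta_reduce
    ring
  have h := lap_radial (fun t => Real.exp (-α * t)) (fun t => -α * Real.exp (-α * t))
      (fun t => α ^ 2 * Real.exp (-α * t)) c Set.univ isOpen_univ x trivial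
      (fun y _ => hg (nsqc c y)) hG
  have hgb : gbar α c = fun y => Real.exp (-α * nsqc c y) := rfl
  rw [hgb, h]
  ring

lemma contDiff_gbar (α : ℝ) (c : Euc n) : ContDiff ℝ 2 (gbar α c) :=
  Real.contDiff_exp.comp ((contDiff_const.mul (contDiff_nsqc c)))

/-! ### Annuli -/

def ann (c : Euc n) (a b : ℝ) : Set (Euc n) := {x | a ≤ ‖x - c‖ ∧ ‖x - c‖ ≤ b}

lemma isCompact_ann (c : Euc n) (a b : ℝ) : IsCompact (ann c a b) := by
  have : ann c a b = Metric.closedBall c b ∩ (Metric.ball c a)ᶜ := by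
    ext x
    simp [ann, Metric.mem_closedBall, Metric.mem_ball, dist_eq_norm, and_comm, not_lt]
  rw [this]
  exact (isCompact_closedBall c b).inter_right (Metric.isOpen_ball.isClosed_compl)

lemma interior_ann (c : Euc n) {a b : ℝ} (ha : 0 < a) (hb : 0 < b) :
    interior (ann c a b) = {x | a < ‖x - c‖ ∧ ‖x - c‖ < b} := by
  have h1 : ann c a b = Metric.closedBall c b ∩ (Metric.ball c a)ᶜ := by
    ext x
    simp [ann, Metric.mem_closedBall, Metric.mem_ball, dist_eq_norm, and_comm, not_lt]
  rw [h1, interior_inter, interior_closedBall c (ne_of_gt hb), interior_compl,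
    closure_ball c (ne_of_gt ha)]
  ext x
  simp [Metric.mem_ball, Metric.mem_closedBall, dist_eq_norm, and_comm, not_le]

lemma frontier_ann_mem {c : Euc n} {a b : ℝ} (ha : 0 < a) (hb : 0 < b) {x : Euc n}
    (hx : x ∈ ann c a b \ interior (ann c a b)) : ‖x - c‖ = a ∨ ‖x - c‖ = b := by
  obtain ⟨⟨h1, h2⟩, h3⟩ := hx
  rw [interior_ann c ha hb] at h3
  simp only [Set.mem_setOf_eq, not_and_or, not_lt] at h3
  rcases h3 with h | h
  · exact Or.inl (le_antisymm h h1)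
  · exact Or.inr (le_antisymm h2 h)

/-- Weak maximum principle for subharmonic functions on compact sets:
values are bounded by the boundary max. -/
lemma subharmonic_le (hn : 0 < n) {s : Set (Euc n)} (hs : IsCompact s) {f : Euc n → ℝ}
    (hf : ContinuousOn f s) (hf2 : ContDiffOn ℝ 2 f (interior s))
    (hlap : ∀ x ∈ interior s, 0 ≤ lap f x)
    (hbd : ∀ x ∈ s \ interior s, f x ≤ 0) : ∀ x ∈ s, f x ≤ 0 := by
  intro x hx
  -- bound nsqc 0 on s
  obtain ⟨C, hC⟩ := hs.exists_bound_of_continuousOn (contDiff_nsqc (0:Euc n)).continuous.continuousOn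
  have hC0 : 0 ≤ C := le_trans (norm_nonneg _) (hC x hx)
  by_contra hpos
  push_neg at hpos
  set η : ℝ := f x / (2 * C + 2) with hη
  have hηpos : 0 < η := by positivity
  set g : Euc n → ℝ := fun y => f y + η * nsqc 0 y with hg
  have hcm : ContDiff ℝ 2 (fun y : Euc n => η * nsqc 0 y) := contDiff_const.mul (contDiff_nsqc 0)
  have hg2 : ContDiffOn ℝ 2 g (interior s) := hf2.add hcm.contDiffOn
  have hglap : ∀ y ∈ interior s, 0 < lap g y := by
    intro y hy
    have h1 : lap g y = lap f y + lap (fun z => η * nsqc 0 z) y :=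
      lap_add isOpen_interior hf2 hcm.contDiffOn hy
    have h2 : lap (fun z => η * nsqc 0 z) y = η * (2 * n) := by
      rw [lap_const_mul isOpen_univ η (contDiff_nsqc (0:Euc n)).contDiffOn (Set.mem_univ y),
        lap_nsqc]
    have hn' : (0:ℝ) < 2 * n := by
      have : (1:ℝ) ≤ (n:ℝ) := by exact_mod_cast hn
      linarith
    have := hlap y hy
    rw [h1, h2]
    nlinarith
  have hgc : ContinuousOn g s := hf.add hcm.continuous.continuousOn
  obtain ⟨w, hw, hgw⟩ := exists_frontier_max hs hgc hg2 hglap hx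
  have hnsq : ∀ y ∈ s, nsqc 0 y ≤ C := fun y hy => le_trans (le_abs_self _) (hC y hy)
  have h3 : g x ≤ g w := hgw
  have h4 : g w ≤ η * C := by
    have := hbd w hw
    have h5 := hnsq w hw.1
    have : f w + η * nsqc 0 w ≤ 0 + η * C := by
      have := mul_le_mul_of_nonneg_left h5 (le_of_lt hηpos)
      linarith [hbd w hw]
    simpa [hg] using this
  have h6 : f x ≤ η * C := by
    have h7 : f x ≤ g x := by
      have := nsqc_nonneg (0:Euc n) x
      simp only [hg]
      nlinarith
    linarith
  have hCpos : (0:ℝ) < 2 * C + 2 := by linarith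
  rw [hη, div_mul_eq_mul_div, le_div_iff₀ hCpos] at h6
  nlinarith

/-! ### Homogeneity -/

lemma homog_scale {u : Euc n → ℝ} (huhom : PosHomog (-1 : ℝ) u) {x : Euc n} (hx : x ≠ 0) :
    u x = u (‖x‖⁻¹ • x) / ‖x‖ := by
  have hnorm : (0:ℝ) < ‖x‖ := norm_pos_iff.2 hx
  have hunit : (‖x‖⁻¹ • x : Euc n) ≠ 0 := by
    simp [smul_eq_zero, hx, ne_of_gt hnorm, inv_eq_zero]
  have := huhom ‖x‖ hnorm (‖x‖⁻¹ • x) hunit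
  rw [smul_smul, mul_inv_cancel₀ (ne_of_gt hnorm), one_smul] at this
  rw [this, Real.rpow_neg_one, smul_eq_mul]
  ring

lemma homog_bound {u : Euc n → ℝ} (huhom : PosHomog (-1 : ℝ) u) {M : ℝ}
    (hM : ∀ y : Euc n, ‖y‖ = 1 → u y ≤ M) {x : Euc n} (hx : x ≠ 0) :
    u x ≤ M / ‖x‖ := by
  have hnorm : (0:ℝ) < ‖x‖ := norm_pos_iff.2 hx
  have h1 : ‖(‖x‖⁻¹ • x : Euc n)‖ = 1 := by
    rw [norm_smul]
    simp [abs_of_pos (inv_pos.2 hnorm), inv_mul_cancel₀ (ne_of_gt hnorm)]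
  rw [homog_scale huhom hx]
  exact (div_le_div_iff_of_pos_right hnorm).2 (hM _ h1)

lemma nsqc_zero_eq (y : Euc n) : nsqc 0 y = ‖y‖ ^ 2 := by simp [nsqc]

lemma rpw_zero_norm (s : ℝ) (y : Euc n) :
    rpw s 0 y = ‖y‖ ^ (2 * s) := by
  have : rpw s 0 y = (nsqc 0 y) ^ s := rfl
  rw [this, nsqc_zero_eq, ← Real.rpow_natCast ‖y‖ 2, ← Real.rpow_mul (norm_nonneg y)]
  norm_num

/-- Core barrier estimate: for a harmonic function homogeneous of degree `-1` with
`u ≤ M` on the unit sphere, `u x₀ ≤ M ε^{n-3} ‖x₀‖^{2-n} + M/R`. -/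
lemma barrier_bound (hn : 3 ≤ n) {u : Euc n → ℝ}
    (hureg : ContDiffOn ℝ 2 u {x : Euc n | x ≠ 0})
    (huharm : ∀ x : Euc n, x ≠ 0 → lap u x = 0)
    (huhom : PosHomog (-1 : ℝ) u) {M : ℝ} (hM0 : 0 ≤ M)
    (hM : ∀ y : Euc n, ‖y‖ = 1 → u y ≤ M)
    {x₀ : Euc n} (hx₀ : x₀ ≠ 0) {ε R : ℝ} (hε : 0 < ε) (hεx : ε < ‖x₀‖) (hxR : ‖x₀‖ < R) :
    u x₀ ≤ M * ε ^ ((n:ℝ) - 3) * ‖x₀‖ ^ ((2:ℝ) - n) + M / R := by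
  have hn0 : 0 < n := by omega
  have hR : 0 < R := lt_trans (lt_trans hε hεx) hxR
  set σ : ℝ := (2 - (n:ℝ)) / 2 with hσ
  set c₁ : ℝ := -(M * ε ^ ((n:ℝ) - 3)) with hc₁
  set f : Euc n → ℝ := fun y => (u y + c₁ * rpw σ 0 y) - M / R with hf
  set s : Set (Euc n) := ann 0 ε R with hs
  have hsub : ∀ y ∈ s, y ≠ 0 := by
    intro y hy
    have : ε ≤ ‖y - 0‖ := hy.1
    simp only [sub_zero] at this
    intro h; rw [h] at this; simp at this; linarith
  have hisub : interior s ⊆ {y : Euc n | y ≠ 0} := fun y hy => hsub y (interior_subset hy)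
  have hrpwreg : ContDiffOn ℝ 2 (rpw σ 0) {y : Euc n | y ≠ 0} := by
    have := contDiffOn_rpw σ (0 : Euc n)
    convert this using 2
  have hcm : ContDiffOn ℝ 2 (fun y => c₁ * rpw σ 0 y) {y : Euc n | y ≠ 0} :=
    hrpwreg.const_smul c₁
  have hf2 : ContDiffOn ℝ 2 (fun y => u y + c₁ * rpw σ 0 y) (interior s) :=
    (hureg.mono hisub).add (hcm.mono hisub)
  have hf2' : ContDiffOn ℝ 2 f (interior s) := by
    have : f = fun y => (fun z => u z + c₁ * rpw σ 0 z) y - M / R := rfl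
    rw [this]
    exact hf2.sub contDiffOn_const
  have hOopen : IsOpen {y : Euc n | y ≠ 0} := isOpen_compl_singleton
  have hlapf : ∀ y ∈ interior s, lap f y = 0 := by
    intro y hy
    have hy0 : y ≠ 0 := hisub hy
    have h1 : lap f y = lap (fun z => u z + c₁ * rpw σ 0 z) y := lap_sub_const _ _ _
    have h2 : lap (fun z => u z + c₁ * rpw σ 0 z) y = lap u y + lap (fun z => c₁ * rpw σ 0 z) y :=
      lap_add hOopen (hureg) (hcm) hy0
    have h3 : lap (fun z => c₁ * rpw σ 0 z) y = c₁ * lap (rpw σ 0) y :=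
      lap_const_mul hOopen c₁ hrpwreg hy0
    have h4 : lap (rpw σ 0) y = 0 := lap_rpw_harm 0 hy0
    rw [h1, h2, h3, h4, huharm y hy0]
    ring
  have hrpwval : ∀ y : Euc n, y ≠ 0 → rpw σ 0 y = ‖y‖ ^ ((2:ℝ) - n) := by
    intro y hy
    rw [rpw_zero_norm σ y, hσ]
    congr 1
    ring
  have hbd : ∀ y ∈ s \ interior s, f y ≤ 0 := by
    intro y hy
    have hyn := frontier_ann_mem hε hR hy
    simp only [sub_zero] at hyn
    have hy0 : y ≠ 0 := hsub y hy.1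
    have hyval := hrpwval y hy0
    rcases hyn with h | h
    · -- inner sphere ‖y‖ = ε
      have hub : u y ≤ M / ε := by
        have := homog_bound huhom hM hy0
        rwa [h] at this
      have hbv : c₁ * rpw σ 0 y = -(M / ε) := by
        rw [hyval, h, hc₁, neg_mul, mul_assoc, ← Real.rpow_add hε]
        have h9 : (n:ℝ) - 3 + (2 - n) = -1 := by ring
        rw [h9, Real.rpow_neg_one]
        field_simp
      simp only [hf]
      rw [hbv]
      have : 0 ≤ M / R := by positivity
      linarith
    · -- outer sphere ‖y‖ = R
      have hub : u y ≤ M / R := by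
        have := homog_bound huhom hM hy0
        rwa [h] at this
      have hbv : c₁ * rpw σ 0 y ≤ 0 := by
        rw [hyval]
        have h1 : (0:ℝ) ≤ ‖y‖ ^ ((2:ℝ) - n) := Real.rpow_nonneg (norm_nonneg y) _
        have h2 : c₁ ≤ 0 := by
          rw [hc₁]
          have : (0:ℝ) ≤ ε ^ ((n:ℝ) - 3) := Real.rpow_nonneg (le_of_lt hε) _
          nlinarith
        nlinarith
      have : u y + c₁ * rpw σ 0 y - M / R ≤ M / R + 0 - M / R := by
        have := add_le_add hub hbv
        linarith
      calc f y = u y + c₁ * rpw σ 0 y - M / R := rfl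
        _ ≤ M / R + 0 - M / R := this
        _ = 0 := by ring
  have hfc : ContinuousOn f s := by
    have h1 : ContinuousOn u s := (hureg.continuousOn).mono (fun y hy => hsub y hy)
    have h2 : ContinuousOn (fun y => c₁ * rpw σ 0 y) s :=
      (hcm.continuousOn).mono (fun y hy => hsub y hy)
    exact (h1.add h2).sub continuousOn_const
  have hlap0 : ∀ y ∈ interior s, 0 ≤ lap f y := fun y hy => le_of_eq (hlapf y hy).symm
  have hmem : x₀ ∈ s := by
    constructor <;> simp only [sub_zero]
    · exact le_of_lt hεx
    · exact le_of_lt hxR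
  have := subharmonic_le hn0 (isCompact_ann 0 ε R) hfc hf2' hlap0 hbd x₀ hmem
  simp only [hf] at this
  rw [hrpwval x₀ hx₀, hc₁] at this
  linarith

lemma nonpos_of_harm_homog (hn4 : 4 ≤ n) {u : Euc n → ℝ}
    (hureg : ContDiffOn ℝ 2 u {x : Euc n | x ≠ 0})
    (huharm : ∀ x : Euc n, x ≠ 0 → lap u x = 0)
    (huhom : PosHomog (-1 : ℝ) u) {M : ℝ} (hM0 : 0 ≤ M)
    (hM : ∀ y : Euc n, ‖y‖ = 1 → u y ≤ M)
    {x : Euc n} (hx : x ≠ 0) : u x ≤ 0 := by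
  have hn : 3 ≤ n := by omega
  have hxn : (0:ℝ) < ‖x‖ := norm_pos_iff.2 hx
  by_contra hpos
  push_neg at hpos
  set δ : ℝ := u x / 2 with hδ
  have hδpos : 0 < δ := by positivity
  set K : ℝ := ‖x‖ ^ ((2:ℝ) - n) with hK
  have hKpos : 0 < K := Real.rpow_pos_of_pos hxn _
  set R : ℝ := max (‖x‖ + 1) ((2*M+1)/δ) with hR
  set ε : ℝ := min (‖x‖/2) (min 1 (δ/(2*(M*K+1)))) with hε
  have hεpos : 0 < ε := lt_min (by positivity) (lt_min one_pos (by positivity))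
  have hεx : ε < ‖x‖ := lt_of_le_of_lt (min_le_left _ _) (by linarith)
  have hxR : ‖x‖ < R := lt_of_lt_of_le (by linarith) (le_max_left _ _)
  have hRpos : 0 < R := lt_trans hxn hxR
  have hbb := barrier_bound hn hureg huharm huhom hM0 hM hx hεpos hεx hxR
  rw [← hK] at hbb
  -- M / R ≤ δ / 2
  have hb1 : M / R ≤ δ / 2 := by
    rw [div_le_div_iff₀ hRpos two_pos]
    have h1 : (2*M+1)/δ ≤ R := le_max_right _ _
    have h2 : 2*M+1 ≤ δ * R := by
      rw [div_le_iff₀ hδpos] at h1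
      linarith [mul_comm R δ]
    nlinarith
  -- M * ε ^ (n - 3) * K ≤ δ / 2
  have hb2 : M * ε ^ ((n:ℝ) - 3) * K ≤ δ / 2 := by
    have hε1 : ε ≤ 1 := le_trans (min_le_right _ _) (min_le_left _ _)
    have hεδ : ε ≤ δ/(2*(M*K+1)) := le_trans (min_le_right _ _) (min_le_right _ _)
    have hexp : ε ^ ((n:ℝ) - 3) ≤ ε := by
      have h1 : ((1:ℝ)) ≤ (n:ℝ) - 3 := by
        have : (4:ℝ) ≤ (n:ℝ) := by exact_mod_cast hn4
        linarith
      have := Real.rpow_le_rpow_of_exponent_ge hεpos hε1 h1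
      rwa [Real.rpow_one] at this
    have h3 : M * ε ^ ((n:ℝ) - 3) * K ≤ M * ε * K := by
      have := mul_le_mul_of_nonneg_left hexp hM0
      exact mul_le_mul_of_nonneg_right this (le_of_lt hKpos)
    have h4 : M * ε * K ≤ δ / 2 := by
      have h5 : ε * (2*(M*K+1)) ≤ δ := by
        rw [le_div_iff₀ (by positivity)] at hεδ
        exact hεδ
      nlinarith
    linarith
  have : u x ≤ δ := by linarith
  rw [hδ] at this
  linarith

/-! ### Strong minimum principle -/

lemma deriv_nonneg_of_min {φ : ℝ → ℝ} {m T : ℝ} (hT : 0 < T)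
    (hφ : ∀ t ∈ Set.Icc (0:ℝ) T, 0 ≤ φ t) (h0 : φ 0 = 0)
    (hd : HasDerivAt φ m 0) : 0 ≤ m := by
  have hds : HasDerivWithinAt φ m (Set.Ioi 0) 0 := hd.hasDerivWithinAt
  have hslope := hasDerivWithinAt_iff_tendsto_slope.1 hds
  have hIoi : Set.Ioi (0:ℝ) \ {0} = Set.Ioi 0 := by
    ext t; simp only [Set.mem_diff, Set.mem_Ioi, Set.mem_singleton_iff]
    constructor
    · exact fun h => h.1
    · exact fun h => ⟨h, ne_of_gt h⟩
  rw [hIoi] at hslope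
  refine ge_of_tendsto hslope ?_
  have hev : ∀ᶠ t in nhdsWithin (0:ℝ) (Set.Ioi 0), t < T :=
    eventually_nhdsWithin_of_eventually_nhds (eventually_lt_nhds hT)
  filter_upwards [hev, self_mem_nhdsWithin] with t ht ht'
  have htpos : (0:ℝ) < t := ht'
  have : slope φ 0 t = φ t / t := by
    rw [slope_def_field, h0, sub_zero, sub_zero]
  rw [this]
  exact div_nonneg (hφ t ⟨le_of_lt htpos, le_of_lt ht⟩) (le_of_lt htpos)

lemma fderiv_gbar_at (α : ℝ) (c z : Euc n) :
    HasFDerivAt (gbar α c)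
      ((Real.exp (-α * nsqc c z) * (-α)) • (2 • innerSL ℝ (z - c))) z := by
  have h1 : HasFDerivAt (fun x : Euc n => -α * nsqc c x) ((-α) • (2 • innerSL ℝ (z - c))) z := by
    simpa using (hasFDerivAt_nsqc c z).const_mul (-α)
  have h2 := (Real.hasDerivAt_exp (-α * nsqc c z)).comp_hasFDerivAt z h1
  have hg : gbar α c = fun x => Real.exp (-α * nsqc c x) := rfl
  rw [hg]
  refine h2.congr_fderiv ?_
  simp only [smul_smul]

set_option maxHeartbeats 1000000 in
/-- Hopf-style openness of the zero set of a nonnegative harmonic function on `{x ≠ 0}`. -/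
lemma zero_set_isOpen (hn : 0 < n) {w : Euc n → ℝ}
    (hreg : ContDiffOn ℝ 2 w {x : Euc n | x ≠ 0})
    (hharm : ∀ x : Euc n, x ≠ 0 → lap w x = 0)
    (hpos : ∀ x : Euc n, x ≠ 0 → 0 ≤ w x) :
    IsOpen {x : Euc n | x ≠ 0 ∧ w x = 0} := by
  have hΩ : IsOpen {x : Euc n | x ≠ 0} := isOpen_compl_singleton
  rw [Metric.isOpen_iff]
  rintro p ⟨hp0, hwp⟩
  set ρ : ℝ := ‖p‖ / 2 with hρ
  have hρpos : 0 < ρ := by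
    have : 0 < ‖p‖ := norm_pos_iff.2 hp0
    positivity
  have hballΩ : ∀ x : Euc n, ‖x - p‖ ≤ ρ → x ≠ 0 := by
    intro x hx h0
    rw [h0] at hx
    have : ‖p‖ ≤ ρ := by
      have := norm_sub_norm_le (0 - p) (-p)
      simpa [norm_neg] using hx
    rw [hρ] at this
    linarith [norm_pos_iff.2 hp0]
  refine ⟨ρ/8, by positivity, ?_⟩
  intro y hy
  rw [Metric.mem_ball, dist_eq_norm] at hy
  have hyΩ : y ≠ 0 := hballΩ y (by linarith [hy])
  refine ⟨hyΩ, ?_⟩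
  by_contra hwy
  have hwypos : 0 < w y := lt_of_le_of_ne (hpos y hyΩ) (Ne.symm hwy)
  -- the compact zero set in the ball of radius ρ/2
  set Z : Set (Euc n) := Metric.closedBall p (ρ/2) ∩ w ⁻¹' {0} with hZ
  have hZsubΩ : Metric.closedBall p (ρ/2) ⊆ {x : Euc n | x ≠ 0} := by
    intro x hx
    rw [Metric.mem_closedBall, dist_eq_norm] at hx
    exact hballΩ x (by linarith)
  have hZclosed : IsClosed Z :=
    ContinuousOn.preimage_isClosed_of_isClosed
      ((hreg.continuousOn).mono hZsubΩ) Metric.isClosed_closedBall isClosed_singleton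
  have hZcomp : IsCompact Z :=
    (isCompact_closedBall p (ρ/2)).of_isClosed_subset hZclosed Set.inter_subset_left
  have hpZ : p ∈ Z := by
    constructor
    · rw [Metric.mem_closedBall, dist_self]; positivity
    · simp [hwp]
  have hZne : Z.Nonempty := ⟨p, hpZ⟩
  have hyZ : y ∉ Z := by
    intro hyZ
    exact hwy hyZ.2
  set r : ℝ := Metric.infDist y Z with hr
  have hrpos : 0 < r := (hZclosed.notMem_iff_infDist_pos hZne).1 hyZ
  have hrle : r < ρ/8 := by
    have h1 : Metric.infDist y Z ≤ dist y p := Metric.infDist_le_dist_of_mem hpZ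
    rw [dist_eq_norm, ← hr] at h1
    exact lt_of_le_of_lt h1 hy
  obtain ⟨z, hzZ, hzd⟩ := hZcomp.exists_infDist_eq_dist hZne y
  rw [← hr] at hzd
  have hdzy : ‖y - z‖ = r := by rw [hzd, dist_eq_norm]
  -- membership in the ball of radius ρ/2 for annulus points
  have hannB : ∀ x : Euc n, ‖x - y‖ ≤ r → x ∈ Metric.closedBall p (ρ/2) := by
    intro x hx
    rw [Metric.mem_closedBall, dist_eq_norm]
    calc ‖x - p‖ = ‖(x - y) + (y - p)‖ := by rw [sub_add_sub_cancel]
      _ ≤ ‖x - y‖ + ‖y - p‖ := norm_add_le _ _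
      _ ≤ r + ρ/8 := by linarith [le_of_lt hy]
      _ ≤ ρ/2 := by linarith
  -- positivity on the open ball around y
  have hballpos : ∀ x : Euc n, ‖x - y‖ < r → 0 < w x := by
    intro x hx
    have hxB := hannB x (le_of_lt hx)
    have hxΩ : x ≠ 0 := hZsubΩ hxB
    rcases lt_or_eq_of_le (hpos x hxΩ) with h | h
    · exact h
    · exfalso
      have hxZ : x ∈ Z := ⟨hxB, by simp [← h]⟩
      have h8 : Metric.infDist y Z ≤ dist y x := Metric.infDist_le_dist_of_mem hxZ
      rw [dist_eq_norm, ← hr] at h8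
      rw [norm_sub_rev] at h8
      linarith
  -- the barrier argument
  have hzB : z ∈ Metric.closedBall p (ρ/2) := hzZ.1
  have hzΩ : z ≠ 0 := hZsubΩ hzB
  have hwz : w z = 0 := hzZ.2
  have hdzy' : ‖z - y‖ = r := by rw [norm_sub_rev]; exact hdzy
  set α : ℝ := (2*(n:ℝ)+1)/r^2 with hα
  have hαpos : 0 < α := by positivity
  have hαr : α * r^2 = 2*(n:ℝ)+1 := by
    rw [hα]; field_simp
  set E : ℝ := Real.exp (-α * r^2) with hE
  have hEpos : 0 < E := Real.exp_pos _
  set Ei : ℝ := Real.exp (-α * (r/2)^2) with hEi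
  have hEipos : 0 < Ei := Real.exp_pos _
  -- the sphere of radius r/2 and the minimum m of w on it
  have hr2pos : 0 < r/2 := by positivity
  have hsne : (Metric.sphere y (r/2)).Nonempty := by
    haveI : Nontrivial (Euc n) := by
      refine nontrivial_of_ne (EuclideanSpace.single (⟨0, hn⟩ : Fin n) (1:ℝ)) 0 ?_
      intro h
      have := congrArg (fun v : Euc n => v (⟨0, hn⟩ : Fin n)) h
      simp [EuclideanSpace.single_apply] at this
    exact NormedSpace.sphere_nonempty.2 (le_of_lt hr2pos)
  have hsphsub : Metric.sphere y (r/2) ⊆ Metric.closedBall p (ρ/2) := by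
    intro x hx
    rw [Metric.mem_sphere, dist_eq_norm] at hx
    exact hannB x (by rw [hx]; linarith)
  obtain ⟨xm, hxm, hxmmin⟩ := (isCompact_sphere y (r/2)).exists_isMinOn hsne
    ((hreg.continuousOn).mono (fun x hx => hZsubΩ (hsphsub hx)))
  set m : ℝ := w xm with hm
  have hmpos : 0 < m := by
    apply hballpos
    have : ‖xm - y‖ = r/2 := by
      have := hxm
      rw [Metric.mem_sphere, dist_eq_norm] at this
      exact this
    rw [this]; linarith
  set ε : ℝ := m / Ei with hεdef
  have hεpos : 0 < ε := by positivity
  -- the comparison function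
  set f : Euc n → ℝ := fun x => (ε * gbar α y x + (-1) * w x) - ε * E with hfdef
  set A : Set (Euc n) := ann y (r/2) r with hA
  have hAsubB : A ⊆ Metric.closedBall p (ρ/2) := fun x hx => hannB x hx.2
  have hAsubΩ : A ⊆ {x : Euc n | x ≠ 0} := fun x hx => hZsubΩ (hAsubB hx)
  have hiA : interior A ⊆ A := interior_subset
  have hintA : interior A = {x : Euc n | r/2 < ‖x - y‖ ∧ ‖x - y‖ < r} :=
    interior_ann y hr2pos hrpos
  have hgbarC : ContDiffOn ℝ 2 (fun x => ε * gbar α y x) {x : Euc n | x ≠ 0} :=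
    (contDiff_const.mul (contDiff_gbar α y)).contDiffOn
  have hwC : ContDiffOn ℝ 2 (fun x => (-1 : ℝ) * w x) {x : Euc n | x ≠ 0} :=
    contDiff_const.contDiffOn.mul hreg
  have hsumC : ContDiffOn ℝ 2 (fun x => ε * gbar α y x + (-1) * w x) {x : Euc n | x ≠ 0} :=
    hgbarC.add hwC
  have hfC : ContDiffOn ℝ 2 f (interior A) := by
    have : ContDiffOn ℝ 2 f {x : Euc n | x ≠ 0} := hsumC.sub contDiffOn_const
    exact this.mono (fun x hx => hAsubΩ (hiA hx))
  have hflap : ∀ x ∈ interior A, 0 ≤ lap f x := by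
    intro x hx
    have hxΩ : x ≠ 0 := hAsubΩ (hiA hx)
    have h1 : lap f x = lap (fun z => ε * gbar α y z + (-1) * w z) x := lap_sub_const _ _ _
    have h2 : lap (fun z => ε * gbar α y z + (-1) * w z) x
        = lap (fun z => ε * gbar α y z) x + lap (fun z => (-1:ℝ) * w z) x :=
      lap_add hΩ hgbarC hwC hxΩ
    have h3 : lap (fun z => ε * gbar α y z) x = ε * lap (gbar α y) x :=
      lap_const_mul hΩ ε (contDiff_gbar α y).contDiffOn hxΩ
    have h4 : lap (fun z => (-1:ℝ) * w z) x = -1 * lap w x :=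
      lap_const_mul hΩ (-1) hreg hxΩ
    rw [h1, h2, h3, h4, hharm x hxΩ, lap_gbar]
    have hnsq : (r/2)^2 ≤ nsqc y x := by
      have hx2 := (hintA ▸ hx).1
      have : nsqc y x = ‖x - y‖^2 := rfl
      rw [this]
      nlinarith [norm_nonneg (x - y)]
    have hpos2 : 0 < 4 * α^2 * nsqc y x - 2 * n * α := by
      have h5 : 4 * α^2 * ((r/2)^2) ≤ 4 * α^2 * nsqc y x :=
        mul_le_mul_of_nonneg_left hnsq (by positivity)
      have h6 : 4 * α^2 * ((r/2)^2) = α * (α * r^2) := by ring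
      rw [hαr] at h6
      have h7 : α * (2*(n:ℝ)+1) = 2*(n:ℝ)*α + α := by ring
      linarith
    have h9 : (0:ℝ) < Real.exp (-α * nsqc y x) := Real.exp_pos _
    have h10 : 0 < (4 * α^2 * nsqc y x - 2 * n * α) * Real.exp (-α * nsqc y x) :=
      mul_pos hpos2 h9
    have h11 := mul_pos hεpos h10
    linarith
  have hfbd : ∀ x ∈ A \ interior A, f x ≤ 0 := by
    intro x hx
    have hxΩ : x ≠ 0 := hAsubΩ hx.1
    have hwx : 0 ≤ w x := hpos x hxΩ
    rcases frontier_ann_mem hr2pos hrpos hx with h | h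
    · -- inner sphere: gbar = Ei, w ≥ m
      have hgb : gbar α y x = Ei := by
        have : nsqc y x = (r/2)^2 := by
          have : nsqc y x = ‖x - y‖^2 := rfl
          rw [this, h]
        simp only [gbar, this, hEi]
      have hwm : m ≤ w x := by
        apply hxmmin
        rw [Metric.mem_sphere, dist_eq_norm]
        exact h
      have hεEi : ε * Ei = m := by
        rw [hεdef]; field_simp
      have : f x = ε * Ei - w x - ε * E := by
        simp only [hfdef, hgb]; ring
      rw [this, hεEi]
      nlinarith
    · -- outer sphere: gbar = E
      have hgb : gbar α y x = E := by
        have : nsqc y x = r^2 := by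
          have : nsqc y x = ‖x - y‖^2 := rfl
          rw [this, h]
        simp only [gbar, this, hE]
      have : f x = -(w x) := by
        simp only [hfdef, hgb]; ring
      rw [this]
      linarith
  have hfcont : ContinuousOn f A :=
    ((hsumC.continuousOn).mono hAsubΩ).sub continuousOn_const
  have hcomp := subharmonic_le hn (isCompact_ann y (r/2) r) hfcont hfC hflap hfbd
  -- now the Hopf derivative argument along the segment from z to y
  set d : Euc n := y - z with hd
  set L : ℝ → Euc n := fun t => z + t • d with hLdef
  have hL0 : L 0 = z := by simp [hLdef]
  have hLd : ∀ t : ℝ, HasDerivAt L d t := by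
    intro t
    have := ((hasDerivAt_id' t).smul_const d).const_add z
    rw [one_smul] at this
    exact this
  have hLann : ∀ t : ℝ, t ∈ Set.Icc (0:ℝ) (1/2) → L t ∈ A := by
    intro t ht
    have h1 : L t - y = (1 - t) • (z - y) := by
      simp only [hLdef, hd]
      module
    have h2 : ‖L t - y‖ = (1 - t) * r := by
      rw [h1, norm_smul, hdzy']
      rw [Real.norm_eq_abs, abs_of_nonneg (by linarith [ht.2])]
    constructor
    · rw [h2]; nlinarith [ht.1, ht.2, hrpos]
    · rw [h2]; nlinarith [ht.1, ht.2, hrpos]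
  set φ : ℝ → ℝ := fun t => w (L t) - ε * (gbar α y (L t) - E) with hφdef
  have hφ0 : φ 0 = 0 := by
    have hgbz : gbar α y z = E := by
      have : nsqc y z = r^2 := by
        have : nsqc y z = ‖z - y‖^2 := rfl
        rw [this, hdzy']
      simp only [gbar, this, hE]
    simp [hφdef, hL0, hwz, hgbz]
  have hφnonneg : ∀ t ∈ Set.Icc (0:ℝ) (1/2), 0 ≤ φ t := by
    intro t ht
    have := hcomp (L t) (hLann t ht)
    simp only [hfdef] at this
    simp only [hφdef]
    linarith
  -- derivative of φ at 0
  have hminz : IsLocalMin w z := by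
    unfold IsLocalMin IsMinFilter
    filter_upwards [hΩ.mem_nhds hzΩ] with x hx
    rw [hwz]
    exact hpos x hx
  have hfw0 : fderiv ℝ w z = 0 := hminz.fderiv_eq_zero
  have hdw : HasDerivAt (fun t => w (L t)) 0 0 := by
    have hFw : HasFDerivAt w (fderiv ℝ w z) z :=
      (diffAt_of_contDiffOn hΩ hreg hzΩ).hasFDerivAt
    have hFw' : HasFDerivAt w (fderiv ℝ w z) (L 0) := by rw [hL0]; exact hFw
    have := hFw'.comp_hasDerivAt (0:ℝ) (hLd 0)
    rw [hfw0, ContinuousLinearMap.zero_apply] at this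
    exact this
  have hnsqz : nsqc y z = r^2 := by
    have : nsqc y z = ‖z - y‖^2 := rfl
    rw [this, hdzy']
  have hinner : (innerSL ℝ (z - y)) d = -(r^2) := by
    have h1 : (innerSL ℝ (z - y)) d = (inner ℝ (z - y) d : ℝ) := rfl
    have hd' : d = -(z - y) := (neg_sub z y).symm
    rw [h1, hd', inner_neg_right, real_inner_self_eq_norm_sq, hdzy']
  have hdg : HasDerivAt (fun t => gbar α y (L t)) (2*α*r^2*E) 0 := by
    have hFg := fderiv_gbar_at α y z
    have hFg' : HasFDerivAt (gbar α y)
        ((Real.exp (-α * nsqc y z) * (-α)) • (2 • innerSL ℝ (z - y))) (L 0) := by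
      rw [hL0]; exact hFg
    have hcomp' := hFg'.comp_hasDerivAt (0:ℝ) (hLd 0)
    refine hcomp'.congr_deriv ?_
    have happ : ((Real.exp (-α * nsqc y z) * (-α)) • (2 • innerSL ℝ (z - y))) d
        = (Real.exp (-α * nsqc y z) * (-α)) * (2 * ((innerSL ℝ (z - y)) d)) := by
      simp only [ContinuousLinearMap.coe_smul', Pi.smul_apply, smul_eq_mul, two_smul,
        ContinuousLinearMap.add_apply]
      ring
    rw [happ, hinner, hnsqz, ← hE]
    ring
  have hdφ : HasDerivAt φ (-(ε * (2*α*r^2*E))) 0 := by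
    have h1 : HasDerivAt (fun t => gbar α y (L t) - E) (2*α*r^2*E) 0 := hdg.sub_const E
    have h2 : HasDerivAt (fun t => ε * (gbar α y (L t) - E)) (ε * (2*α*r^2*E)) 0 :=
      h1.const_mul ε
    have h3 := hdw.sub h2
    simp only [hφdef]
    refine h3.congr_deriv ?_
    ring
  have hcontra := deriv_nonneg_of_min (by norm_num : (0:ℝ) < 1/2) hφnonneg hφ0 hdφ
  have hprod : 0 < ε * (2*α*r^2*E) := by positivity
  linarith

lemma strong_min (hn : 2 ≤ n) {w : Euc n → ℝ}
    (hreg : ContDiffOn ℝ 2 w {x : Euc n | x ≠ 0})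
    (hharm : ∀ x : Euc n, x ≠ 0 → lap w x = 0)
    (hpos : ∀ x : Euc n, x ≠ 0 → 0 ≤ w x)
    {p : Euc n} (hp0 : p ≠ 0) (hwp : w p = 0) :
    ∀ x : Euc n, x ≠ 0 → w x = 0 := by
  have hΩ : IsOpen {x : Euc n | x ≠ 0} := isOpen_compl_singleton
  have hrank : 1 < Module.rank ℝ (Euc n) := by
    have h1 : Module.rank ℝ (Euc n) = (Module.finrank ℝ (Euc n) : Cardinal) :=
      (Module.finrank_eq_rank ℝ (Euc n)).symm
    rw [h1, finrank_euclideanSpace_fin]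
    exact_mod_cast by omega
  have hconn : IsConnected ({(0:Euc n)}ᶜ : Set (Euc n)) :=
    isConnected_compl_singleton_of_one_lt_rank hrank 0
  have hpre : IsPreconnected ({(0:Euc n)}ᶜ : Set (Euc n)) := hconn.isPreconnected
  set U : Set (Euc n) := {x : Euc n | x ≠ 0 ∧ w x = 0} with hU
  set V : Set (Euc n) := {x : Euc n | x ≠ 0} ∩ w ⁻¹' (Set.Ioi 0) with hV
  have hUopen : IsOpen U := zero_set_isOpen (by omega) hreg hharm hpos
  have hVopen : IsOpen V :=
    ContinuousOn.isOpen_inter_preimage hreg.continuousOn hΩ isOpen_Ioi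
  intro x hx
  by_contra hwx
  have hwxpos : 0 < w x := lt_of_le_of_ne (hpos x hx) (Ne.symm hwx)
  have hcover : ({(0:Euc n)}ᶜ : Set (Euc n)) ⊆ U ∪ V := by
    intro q hq
    have hq0 : q ≠ 0 := hq
    rcases lt_or_eq_of_le (hpos q hq0) with h | h
    · exact Or.inr ⟨hq0, h⟩
    · exact Or.inl ⟨hq0, h.symm⟩
  have hUne : (({(0:Euc n)}ᶜ : Set (Euc n)) ∩ U).Nonempty := ⟨p, hp0, hp0, hwp⟩
  have hVne : (({(0:Euc n)}ᶜ : Set (Euc n)) ∩ V).Nonempty := ⟨x, hx, hx, hwxpos⟩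
  obtain ⟨q, _, hqU, hqV⟩ := hpre U V hUopen hVopen hcover hUne hVne
  exact absurd hqU.2 (ne_of_gt hqV.2)

theorem statement15aux (n : ℕ) (hn : 3 ≤ n) (u : Euc n → ℝ)
    (hureg : ContDiffOn ℝ 2 u {x : Euc n | x ≠ 0})
    (huharm : ∀ x : Euc n, x ≠ 0 → lap u x = 0)
    (huhom : PosHomog (-1 : ℝ) u) :
    (4 ≤ n → ∀ x : Euc n, x ≠ 0 → u x = 0) ∧
      (n = 3 → ∃ c : ℝ, ∀ x : Euc n, x ≠ 0 → u x = c / ‖x‖) := by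
  have hΩ : IsOpen {x : Euc n | x ≠ 0} := isOpen_compl_singleton
  have hsub : Metric.sphere (0:Euc n) 1 ⊆ {y : Euc n | y ≠ 0} := by
    intro y hy
    have : ‖y‖ = 1 := mem_sphere_zero_iff_norm.1 hy
    intro h0
    rw [h0] at this
    simp at this
  have hne : (Metric.sphere (0:Euc n) 1).Nonempty := by
    refine ⟨EuclideanSpace.single (⟨0, by omega⟩ : Fin n) (1:ℝ), ?_⟩
    rw [mem_sphere_zero_iff_norm, EuclideanSpace.norm_single]
    norm_num
  constructor
  · -- n ≥ 4
    intro hn4 x hx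
    obtain ⟨w₀, hw₀, hmax⟩ := (isCompact_sphere (0:Euc n) 1).exists_isMaxOn hne
      ((hureg.continuousOn.mono hsub).abs)
    set M : ℝ := |u w₀| with hM
    have hM0 : 0 ≤ M := abs_nonneg _
    have hMu : ∀ y : Euc n, ‖y‖ = 1 → u y ≤ M :=
      fun y hy => le_trans (le_abs_self _) (hmax (mem_sphere_zero_iff_norm.2 hy))
    have hMnu : ∀ y : Euc n, ‖y‖ = 1 → -u y ≤ M :=
      fun y hy => le_trans (neg_le_abs _) (hmax (mem_sphere_zero_iff_norm.2 hy))
    have hharmneg : ∀ z : Euc n, z ≠ 0 → lap (fun y => -u y) z = 0 := by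
      intro z hz
      rw [lap_neg, huharm z hz, neg_zero]
    have hhomneg : PosHomog (-1 : ℝ) (fun y => -u y) := by
      intro t ht z hz
      simp only
      rw [huhom t ht z hz, smul_eq_mul, smul_eq_mul]
      ring
    have h1 : u x ≤ 0 := nonpos_of_harm_homog hn4 hureg huharm huhom hM0 hMu hx
    have h2 : -u x ≤ 0 :=
      nonpos_of_harm_homog hn4 hureg.neg hharmneg hhomneg hM0 hMnu hx
    linarith
  · -- n = 3
    intro hn3
    subst hn3
    obtain ⟨w₀, hw₀, hmax⟩ := (isCompact_sphere (0:Euc 3) 1).exists_isMaxOn hne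
      (hureg.continuousOn.mono hsub)
    have hw₀n : ‖w₀‖ = 1 := mem_sphere_zero_iff_norm.1 hw₀
    have hw₀0 : w₀ ≠ 0 := by
      intro h; rw [h] at hw₀n; simp at hw₀n
    set M : ℝ := u w₀ with hM
    have hMu : ∀ y : Euc 3, ‖y‖ = 1 → u y ≤ M :=
      fun y hy => hmax (mem_sphere_zero_iff_norm.2 hy)
    set σ : ℝ := (2 - ((3:ℕ):ℝ)) / 2 with hσ
    have hσval : 2 * σ = -1 := by rw [hσ]; norm_num
    have hrpwv : ∀ y : Euc 3, rpw σ 0 y = ‖y‖ ^ (-1 : ℝ) := by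
      intro y
      rw [rpw_zero_norm σ y, hσval]
    set W : Euc 3 → ℝ := fun y => M * rpw σ 0 y + (-1) * u y with hW
    have hWreg : ContDiffOn ℝ 2 W {x : Euc 3 | x ≠ 0} :=
      (contDiffOn_const.mul (contDiffOn_rpw σ 0)).add (contDiffOn_const.mul hureg)
    have hWharm : ∀ x : Euc 3, x ≠ 0 → lap W x = 0 := by
      intro x hx
      have h1 : lap W x = lap (fun y => M * rpw σ 0 y) x + lap (fun y => (-1:ℝ) * u y) x :=
        lap_add hΩ (contDiffOn_const.mul (contDiffOn_rpw σ 0))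
          (contDiffOn_const.mul hureg) hx
      have h2 : lap (fun y => M * rpw σ 0 y) x = M * lap (rpw σ 0) x :=
        lap_const_mul hΩ M (contDiffOn_rpw σ 0) hx
      have h3 : lap (fun y => (-1:ℝ) * u y) x = -1 * lap u x :=
        lap_const_mul hΩ (-1) hureg hx
      rw [h1, h2, h3, huharm x hx, lap_rpw_harm 0 hx]
      ring
    have hWpos : ∀ x : Euc 3, x ≠ 0 → 0 ≤ W x := by
      intro x hx
      have h1 : u x ≤ M / ‖x‖ := homog_bound huhom hMu hx
      have h2 : W x = M * ‖x‖ ^ (-1:ℝ) - u x := by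
        simp only [hW, hrpwv]; ring
      rw [h2, Real.rpow_neg_one, ← div_eq_mul_inv]
      linarith
    have hWw₀ : W w₀ = 0 := by
      simp only [hW, hrpwv, hw₀n, Real.one_rpow]
      ring
    have hzero := strong_min (by omega) hWreg hWharm hWpos hw₀0 hWw₀
    refine ⟨M, fun x hx => ?_⟩
    have := hzero x hx
    simp only [hW, hrpwv] at this
    rw [Real.rpow_neg_one] at this
    rw [div_eq_mul_inv]
    linarith


theorem statement15 (n : ℕ) (hn : 3 ≤ n) (u : Euc n → ℝ)
    (hureg : ContDiffOn ℝ 2 u {x : Euc n | x ≠ 0})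
    (huharm : ∀ x : Euc n, x ≠ 0 → lap u x = 0)
    (huhom : PosHomog (-1 : ℝ) u) :
    (4 ≤ n → ∀ x : Euc n, x ≠ 0 → u x = 0) ∧
      (n = 3 → ∃ c : ℝ, ∀ x : Euc n, x ≠ 0 → u x = c / ‖x‖) :=
  statement15aux n hn u hureg huharm huhom

end
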